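/- (Prouhet's theorem for the PTM sequence) Let (a_n) be the Prouhet–Thue–Morse sequence and let M ≥ 0 and N = 2^{M+1}. Then for every integer m with 0 ≤ m ≤ M, Σ_{n=0}^{N−1} (−1)^{a_n}·n^m = 0; equivalently, Σ_{n=0}^{N−1} (1 − a_n)·n^m = Σ_{n=0}^{N−1} a_n·n^m. -/
import Mathlib


open scoped BigOperators

lemma ptm_pair_sum (N : ℕ) (f : ℕ → ℤ) :
    ∑ n ∈ Finset.range (2 * N), f n
      = ∑ k ∈ Finset.range N, (f (2 * k) + f (2 * k + 1)) := by
  induction N with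
  | zero => simp
  | succ n ih =>
    have h2 : 2 * (n + 1) = 2 * n + 1 + 1 := by ring
    rw [h2, Finset.sum_range_succ, Finset.sum_range_succ, ih,
      Finset.sum_range_succ]
    ring

lemma ptm_le_one (a : ℕ → ℕ) (ha0 : a 0 = 0) (hae : ∀ k, a (2 * k) = a k)
    (hao : ∀ k, a (2 * k + 1) = 1 - a k) : ∀ n, a n ≤ 1 := by
  intro n
  induction n using Nat.strong_induction_on with
  | _ n ih =>
    rcases Nat.even_or_odd n with ⟨k, hk⟩ | ⟨k, hk⟩
    · subst hk
      rcases Nat.eq_zero_or_pos k with h | h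
      · simp [h, ha0]
      · rw [show k + k = 2 * k by ring, hae]
        exact ih k (by omega)
    · subst hk
      rw [show 2 * k + 1 = 2 * k + 1 by rfl, hao]
      omega

lemma ptm_key (a : ℕ → ℕ) (ha0 : a 0 = 0) (hae : ∀ k, a (2 * k) = a k)
    (hao : ∀ k, a (2 * k + 1) = 1 - a k) :
    ∀ M, ∀ m ≤ M,
      ∑ n ∈ Finset.range (2 ^ (M + 1)), (-1 : ℤ) ^ (a n) * (n : ℤ) ^ m = 0 := by
  have h01 := ptm_le_one a ha0 hae hao
  have hso : ∀ k, ((-1 : ℤ)) ^ (a (2 * k + 1)) = -((-1 : ℤ)) ^ (a k) := by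
    intro k
    rw [hao]
    have := h01 k
    have h : a k = 0 ∨ a k = 1 := by omega
    rcases h with h | h <;> simp [h]
  intro M
  induction M with
  | zero =>
    intro m hm
    interval_cases m
    have h1 : a 1 = 1 := by have := hao 0; simpa [ha0] using this
    norm_num [Finset.sum_range_succ, ha0, h1]
  | succ M ih =>
    intro m hm
    have h2 : 2 ^ (M + 1 + 1) = 2 * 2 ^ (M + 1) := by ring
    rw [h2, ptm_pair_sum]
    have hstep : ∀ k ∈ Finset.range (2 ^ (M + 1)),
        (-1 : ℤ) ^ (a (2 * k)) * ((2 * k : ℕ) : ℤ) ^ m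
          + (-1 : ℤ) ^ (a (2 * k + 1)) * ((2 * k + 1 : ℕ) : ℤ) ^ m
        = -∑ j ∈ Finset.range m,
            ((-1 : ℤ) ^ (a k) * (m.choose j : ℤ) * (2 * (k : ℤ)) ^ j) := by
      intro k _
      rw [hae, hso]
      push_cast
      have hb : (2 * (k : ℤ) + 1) ^ m
          = ∑ j ∈ Finset.range (m + 1), (2 * (k : ℤ)) ^ j * (m.choose j : ℤ) := by
        rw [add_pow]; simp
      rw [hb, Finset.sum_range_succ, Nat.choose_self]
      have hsum : ∑ j ∈ Finset.range m,
          ((-1 : ℤ) ^ (a k) * (m.choose j : ℤ) * (2 * (k : ℤ)) ^ j)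
          = (-1 : ℤ) ^ (a k)
            * ∑ j ∈ Finset.range m, (2 * (k : ℤ)) ^ j * (m.choose j : ℤ) := by
        rw [Finset.mul_sum]; exact Finset.sum_congr rfl fun j _ => by ring
      rw [hsum]
      push_cast
      ring
    rw [Finset.sum_congr rfl hstep]
    have hz : ∀ j ∈ Finset.range m,
        ∑ k ∈ Finset.range (2 ^ (M + 1)),
          ((-1 : ℤ) ^ (a k) * (m.choose j : ℤ) * (2 * (k : ℤ)) ^ j) = 0 := by
      intro j hj
      have hjm : j ≤ M := by
        have := Finset.mem_range.mp hj; omega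
      have h0 := ih j hjm
      calc ∑ k ∈ Finset.range (2 ^ (M + 1)),
            ((-1 : ℤ) ^ (a k) * (m.choose j : ℤ) * (2 * (k : ℤ)) ^ j)
          = ((m.choose j : ℤ) * 2 ^ j)
            * ∑ k ∈ Finset.range (2 ^ (M + 1)), (-1 : ℤ) ^ (a k) * (k : ℤ) ^ j := by
            rw [Finset.mul_sum]
            exact Finset.sum_congr rfl fun k _ => by rw [mul_pow]; ring
        _ = 0 := by rw [h0, mul_zero]
    rw [Finset.sum_neg_distrib, Finset.sum_comm]
    rw [Finset.sum_eq_zero fun j hj => hz j hj, neg_zero]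

/-- (Prouhet's theorem for the PTM sequence) If `(a_n)` is the Prouhet–Thue–Morse
sequence (`a_0 = 0`, `a_{2k} = a_k`, `a_{2k+1} = 1 - a_k`) and `N = 2^{M+1}`, then for
every `0 ≤ m ≤ M`, `Σ_{n=0}^{N-1} (-1)^{a_n} n^m = 0`; equivalently
`Σ_{n=0}^{N-1} (1 - a_n) n^m = Σ_{n=0}^{N-1} a_n n^m`. -/
theorem stmt14 (M : ℕ) (a : ℕ → ℕ) (ha0 : a 0 = 0)
    (hae : ∀ k, a (2 * k) = a k) (hao : ∀ k, a (2 * k + 1) = 1 - a k) :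
    ∀ m ≤ M,
      (∑ n ∈ Finset.range (2 ^ (M + 1)), (-1 : ℤ) ^ (a n) * (n : ℤ) ^ m = 0) ∧
      (∑ n ∈ Finset.range (2 ^ (M + 1)), (1 - (a n : ℤ)) * (n : ℤ) ^ m
        = ∑ n ∈ Finset.range (2 ^ (M + 1)), (a n : ℤ) * (n : ℤ) ^ m) := by
  intro m hm
  have h1 := ptm_key a ha0 hae hao M m hm
  refine ⟨h1, ?_⟩
  have h01 := ptm_le_one a ha0 hae hao
  rw [← sub_eq_zero, ← Finset.sum_sub_distrib, ← h1]
  apply Finset.sum_congr rfl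
  intro n _
  have := h01 n
  have h : a n = 0 ∨ a n = 1 := by omega
  rcases h with h | h <;> simp [h]
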